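/- For τ ∈ ℝ, there is a unique u(τ) > 0 satisfying 1/u + arctan(u) = e^τ + π/2, and setting v(τ) = e^τ, the pair (u(τ), v(τ)) is a solution of the system u′ = −u²(u² + 1)·v, v′ = v. Moreover v(τ) → 0 while u(τ) → +∞ as τ → −∞. -/

import Mathlib

open Filter Real Set

noncomputable def hfun (x : ℝ) : ℝ := 1 / x + Real.arctan x

lemma hfun_hasDeriv {x : ℝ} (hx : 0 < x) :
    HasDerivAt hfun (-(x ^ 2 * (1 + x ^ 2))⁻¹) x := by
  have h1 : HasDerivAt (fun x : ℝ => 1 / x + Real.arctan x)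
      (-(x ^ 2)⁻¹ + 1 / (1 + x ^ 2)) x := by
    simpa only [one_div, Pi.add_def] using (hasDerivAt_inv hx.ne').add (Real.hasDerivAt_arctan x)
  show HasDerivAt (fun x : ℝ => 1 / x + Real.arctan x) _ x
  convert h1 using 1
  have h2 : (x:ℝ)^2 ≠ 0 := by positivity
  have h3 : (1:ℝ) + x ^ 2 ≠ 0 := by positivity
  field_simp
  ring

lemma hfun_anti : StrictAntiOn hfun (Ioi (0:ℝ)) := by
  apply strictAntiOn_of_deriv_neg (convex_Ioi 0)
  · intro x hx
    exact (hfun_hasDeriv hx).continuousAt.continuousWithinAt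
  · intro x hx
    rw [interior_Ioi] at hx
    have hx' : 0 < x := hx
    rw [(hfun_hasDeriv hx').deriv]
    have : (0:ℝ) < (x ^ 2 * (1 + x ^ 2))⁻¹ := by positivity
    linarith

lemma arctan_pos {x : ℝ} (hx : 0 < x) : 0 < Real.arctan x := by
  have := Real.arctan_strictMono hx
  simpa using this

lemma arctan_lt_self {x : ℝ} (hx : 0 < x) : Real.arctan x < x := by
  have h1 : 0 < Real.arctan x := arctan_pos hx
  have h2 : Real.arctan x < π / 2 := Real.arctan_lt_pi_div_two x
  have := Real.lt_tan h1 h2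
  rwa [Real.tan_arctan] at this

lemma hfun_gt {x : ℝ} (hx : 0 < x) : π / 2 < hfun x := by
  have h1 : Real.arctan x⁻¹ < x⁻¹ := arctan_lt_self (by positivity)
  rw [Real.arctan_inv_of_pos hx] at h1
  unfold hfun
  rw [one_div]
  linarith

lemma hfun_exists_unique {y : ℝ} (hy : π / 2 < y) :
    ∃! u : ℝ, 0 < u ∧ hfun u = y := by
  have hy0 : 0 < y := lt_trans (by positivity) hy
  set b : ℝ := 1 / (y - π / 2) + 1 with hb
  have hy2 : 0 < y - π / 2 := by linarith
  have hb0 : 0 < b := by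
    rw [hb]
    positivity
  have hbval : hfun b < y := by
    have h1 : 1 / b < y - π / 2 := by
      have hbig : 1 / (y - π / 2) < b := by rw [hb]; linarith
      have := one_div_lt_one_div_of_lt (by positivity) hbig
      rwa [one_div_one_div] at this
    have h2 : Real.arctan b < π / 2 := Real.arctan_lt_pi_div_two b
    unfold hfun; linarith
  set a : ℝ := min (1 / y) b with ha
  have ha0 : 0 < a := lt_min (by positivity) hb0
  have haval : y ≤ hfun a := by
    have h1 : a ≤ 1 / y := min_le_left _ _
    have h2 : y ≤ 1 / a := by
      rw [le_div_iff₀ ha0]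
      calc y * a ≤ y * (1 / y) := by nlinarith
        _ = 1 := by field_simp
    have h3 : 0 ≤ Real.arctan a := (arctan_pos ha0).le
    unfold hfun; linarith
  have hab : a ≤ b := min_le_right _ _
  have hcont : ContinuousOn hfun (Icc a b) := by
    intro x hx
    exact (hfun_hasDeriv (lt_of_lt_of_le ha0 hx.1)).continuousAt.continuousWithinAt
  have := intermediate_value_Icc' hab hcont
  have hmem : y ∈ Icc (hfun b) (hfun a) := ⟨hbval.le, haval⟩
  obtain ⟨u, hu, huy⟩ := this hmem
  refine ⟨u, ⟨lt_of_lt_of_le ha0 hu.1, huy⟩, ?_⟩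
  rintro w ⟨hw0, hwy⟩
  exact hfun_anti.injOn hw0 (lt_of_lt_of_le ha0 hu.1) (hwy.trans huy.symm)

noncomputable def gsol (y : ℝ) : ℝ :=
  if hy : π / 2 < y then (hfun_exists_unique hy).exists.choose else 1

lemma gsol_spec {y : ℝ} (hy : π / 2 < y) : 0 < gsol y ∧ hfun (gsol y) = y := by
  rw [gsol, dif_pos hy]
  exact (hfun_exists_unique hy).exists.choose_spec

lemma gsol_eq {y u : ℝ} (hy : π / 2 < y) (hu0 : 0 < u) (hu : hfun u = y) :
    u = gsol y :=
  (hfun_exists_unique hy).unique ⟨hu0, hu⟩ (gsol_spec hy)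

lemma gsol_continuousAt {a : ℝ} (ha : π / 2 < a) : ContinuousAt gsol a := by
  rw [ContinuousAt]
  apply tendsto_order.2
  constructor
  · intro b hb
    rcases le_or_gt b 0 with hb0 | hb0
    · filter_upwards [eventually_gt_nhds ha] with y hy
      exact lt_of_le_of_lt hb0 (gsol_spec hy).1
    · -- 0 < b < gsol a
      have hba : hfun (gsol a) < hfun b :=
        hfun_anti hb0 (gsol_spec ha).1 hb
      rw [(gsol_spec ha).2] at hba
      filter_upwards [eventually_lt_nhds hba, eventually_gt_nhds ha] with y hy1 hy2
      by_contra hcon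
      push_neg at hcon
      have := hfun_anti.le_iff_ge hb0 (gsol_spec hy2).1 |>.2 hcon
      rw [(gsol_spec hy2).2] at this
      linarith
  · intro b hb
    have hb0 : 0 < b := lt_trans (gsol_spec ha).1 hb
    have hba : hfun b < hfun (gsol a) := hfun_anti (gsol_spec ha).1 hb0 hb
    rw [(gsol_spec ha).2] at hba
    filter_upwards [eventually_gt_nhds hba, eventually_gt_nhds ha] with y hy1 hy2
    by_contra hcon
    push_neg at hcon
    have := hfun_anti.le_iff_ge (gsol_spec hy2).1 hb0 |>.2 hcon
    rw [(gsol_spec hy2).2] at this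
    linarith

lemma gsol_hasDeriv {a : ℝ} (ha : π / 2 < a) :
    HasDerivAt gsol (-(gsol a ^ 2 * (1 + gsol a ^ 2))) a := by
  have h0 : 0 < gsol a := (gsol_spec ha).1
  have hne : (-(gsol a ^ 2 * (1 + gsol a ^ 2))⁻¹) ≠ 0 :=
    neg_ne_zero.mpr (inv_ne_zero (by positivity))
  have := HasDerivAt.of_local_left_inverse (gsol_continuousAt ha)
    (hfun_hasDeriv h0) hne ?_
  · rw [inv_neg, inv_inv] at this
    exact this
  · filter_upwards [eventually_gt_nhds ha] with y hy
    exact (gsol_spec hy).2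

theorem example1_spiralless_counterexample :
    (∀ τ : ℝ, ∃! u : ℝ, 0 < u ∧ 1 / u + Real.arctan u = Real.exp τ + π / 2)
    ∧ ∀ u : ℝ → ℝ,
        (∀ τ, 0 < u τ ∧ 1 / u τ + Real.arctan (u τ) = Real.exp τ + π / 2) →
        (∀ τ, HasDerivAt u (-(u τ) ^ 2 * ((u τ) ^ 2 + 1) * Real.exp τ) τ)
        ∧ Tendsto (fun τ => Real.exp τ) atBot (nhds 0)
        ∧ Tendsto u atBot atTop := by
  have hgt : ∀ τ : ℝ, π / 2 < Real.exp τ + π / 2 := fun τ => by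
    have := Real.exp_pos τ; linarith
  constructor
  · intro τ
    exact hfun_exists_unique (hgt τ)
  · intro u hu
    have hueq : ∀ τ, u τ = gsol (Real.exp τ + π / 2) := fun τ =>
      gsol_eq (hgt τ) (hu τ).1 (hu τ).2
    refine ⟨?_, Real.tendsto_exp_atBot, ?_⟩
    · intro τ
      have hw : HasDerivAt (fun t : ℝ => Real.exp t + π / 2) (Real.exp τ) τ :=
        (Real.hasDerivAt_exp τ).add_const _
      have hg := (gsol_hasDeriv (hgt τ)).comp τ hw
      have : u = fun t => gsol (Real.exp t + π / 2) := funext hueq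
      rw [this]
      refine hg.congr_deriv ?_
      beta_reduce
      ring
    · rw [tendsto_atTop]
      intro M
      set M' : ℝ := max M 1 with hM'
      have hM0 : 0 < M' := lt_of_lt_of_le one_pos (le_max_right _ _)
      have hMh : π / 2 < hfun M' := hfun_gt hM0
      have hev : ∀ᶠ τ in atBot, Real.exp τ < hfun M' - π / 2 :=
        Real.tendsto_exp_atBot.eventually_lt_const (by linarith)
      filter_upwards [hev] with τ hτ
      have h1 : hfun (u τ) < hfun M' := by
        rw [hfun, (hu τ).2]; linarith
      have h2 : M' < u τ := by
        by_contra hcon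
        push_neg at hcon
        have := hfun_anti.le_iff_ge hM0 (hu τ).1 |>.2 hcon
        linarith
      exact le_trans (le_max_left _ _) h2.le
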